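/- Let δ > 0 and let f : ℝ → ℝ be a 2π-periodic function admitting an extension F that is continuous on the closed strip {z ∈ ℂ : |Im z| ≤ δ}, holomorphic in its interior, 2π-periodic (F(z + 2π) = F(z)), and bounded with M = sup_{|Im z|≤δ} |F(z)|. Then the Fourier coefficients of f satisfy |f̃_n| ≤ M·e^{−δ|n|} for every n ∈ ℤ. -/

import Mathlib

open Real

noncomputable def fourierCoef (f : ℝ → ℝ) (n : ℤ) : ℂ :=
  (1 / (2 * Real.pi)) * ∫ x in (0:ℝ)..(2 * Real.pi), (f x : ℂ) * Complex.exp (-(Complex.I * n * x))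

/-- Exponential decay of Fourier coefficients of a function with a bounded holomorphic
extension to the closed strip `|Im z| ≤ δ`: `|f̃_n| ≤ M e^{-δ|n|}`. -/
theorem fourierCoef_exp_decay_of_strip_extension
    (δ : ℝ) (hδ : 0 < δ) (f : ℝ → ℝ) (hper : Function.Periodic f (2 * Real.pi))
    (F : ℂ → ℂ) (hext : ∀ x : ℝ, F x = f x)
    (hcont : ContinuousOn F {z : ℂ | |z.im| ≤ δ})
    (hol : DifferentiableOn ℂ F {z : ℂ | |z.im| < δ})
    (hFper : ∀ z : ℂ, |z.im| ≤ δ → F (z + 2 * Real.pi) = F z)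
    (M : ℝ) (hM : ∀ z : ℂ, |z.im| ≤ δ → ‖F z‖ ≤ M) :
    ∀ n : ℤ, ‖fourierCoef f n‖ ≤ M * Real.exp (-δ * |n|) := by
  intro n
  have hM0 : 0 ≤ M := le_trans (norm_nonneg _) (hM 0 (by simp [le_of_lt hδ]))
  set y : ℝ := -δ * Int.sign n with hy
  have hyδ : |y| ≤ δ := by
    rw [hy, abs_mul, abs_neg, abs_of_pos hδ]
    rcases Int.lt_trichotomy n 0 with h | h | h <;>
      simp [Int.sign_eq_one_of_pos, Int.sign_eq_neg_one_of_neg, h, le_of_lt hδ]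
  have hny : (n : ℝ) * y = -δ * |(n : ℝ)| := by
    rcases Int.lt_trichotomy n 0 with h | h | h
    · rw [hy, Int.sign_eq_neg_one_of_neg h, abs_of_neg (by exact_mod_cast h : (n:ℝ) < 0)]
      push_cast; ring
    · simp [hy, h]
    · rw [hy, Int.sign_eq_one_of_pos h, abs_of_pos (by exact_mod_cast h : (0:ℝ) < (n:ℝ))]
      push_cast; ring
  -- the integrand
  set g : ℂ → ℂ := fun z => F z * Complex.exp (-(Complex.I * n * z)) with hg
  have hgcont : ContinuousOn g {z : ℂ | |z.im| ≤ δ} :=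
    hcont.mul (Complex.continuous_exp.comp (by fun_prop)).continuousOn
  have hgdiff : DifferentiableOn ℂ g {z : ℂ | |z.im| < δ} :=
    hol.mul ((Complex.differentiable_exp.comp (by fun_prop)).differentiableOn)
  -- g is 2π-periodic on the strip
  have hgper : ∀ z : ℂ, |z.im| ≤ δ → g (z + 2 * Real.pi) = g z := by
    intro z hz
    have h1 : Complex.exp (-(Complex.I * n * (z + 2 * Real.pi)))
        = Complex.exp (-(Complex.I * n * z)) * Complex.exp ((-n : ℤ) * (2 * Real.pi * Complex.I)) := by
      rw [← Complex.exp_add]; push_cast; ring_nf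
    simp only [hg]
    rw [hFper z hz, h1, Complex.exp_int_mul_two_pi_mul_I, mul_one]
  -- set up rectangle
  set w : ℂ := (2 * Real.pi : ℝ) + (y : ℝ) * Complex.I with hw
  have hwre : w.re = 2 * Real.pi := by simp [hw]
  have hwim : w.im = y := by simp [hw]
  have hsub : Set.uIcc (0:ℂ).re w.re ×ℂ Set.uIcc (0:ℂ).im w.im ⊆ {z : ℂ | |z.im| ≤ δ} := by
    intro z hz
    rw [Complex.mem_reProdIm] at hz
    simp only [Set.mem_setOf_eq]
    have h2 := hz.2
    simp only [Complex.zero_im, hwim] at h2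
    rcases abs_le.1 hyδ with ⟨h3, h4⟩
    rcases Set.mem_uIcc.1 h2 with ⟨ha, hb⟩ | ⟨ha, hb⟩ <;> rw [abs_le] <;> constructor <;> linarith
  have hsub2 : Set.Ioo (min (0:ℂ).re w.re) (max (0:ℂ).re w.re)
      ×ℂ Set.Ioo (min (0:ℂ).im w.im) (max (0:ℂ).im w.im) ⊆ {z : ℂ | |z.im| < δ} := by
    intro z hz
    rw [Complex.mem_reProdIm] at hz
    simp only [Set.mem_setOf_eq]
    have h2 := hz.2
    simp only [Complex.zero_im, hwim] at h2
    rcases abs_le.1 hyδ with ⟨h3, h4⟩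
    have hmin : min 0 y ≤ z.im ∧ z.im ≤ max 0 y := ⟨le_of_lt h2.1, le_of_lt h2.2⟩
    rcases lt_trichotomy y 0 with hc | hc | hc
    · have := min_eq_right (le_of_lt hc) ▸ h2.1
      have := max_eq_left (le_of_lt hc) ▸ h2.2
      rw [abs_lt]; constructor <;> [linarith [min_le_right (0:ℝ) y, h2.1]; skip]
      · calc z.im < max 0 y := h2.2
          _ ≤ δ := by rcases max_cases (0:ℝ) y with ⟨h,_⟩|⟨h,_⟩ <;> rw [h] <;> linarith
    · simp [hc] at h2
    · rw [abs_lt]; constructor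
      · have : -δ ≤ min 0 y := by
          rcases min_cases (0:ℝ) y with ⟨h,_⟩|⟨h,_⟩ <;> rw [h] <;> linarith
        linarith [h2.1]
      · calc z.im < max 0 y := h2.2
          _ ≤ δ := by rcases max_cases (0:ℝ) y with ⟨h,_⟩|⟨h,_⟩ <;> rw [h] <;> linarith
  have key := Complex.integral_boundary_rect_eq_zero_of_continuousOn_of_differentiableOn g 0 w
    (hgcont.mono hsub) (hgdiff.mono hsub2)
  -- vertical sides cancel
  have hvert : (∫ t : ℝ in (0:ℂ).im..w.im, g (w.re + t * Complex.I))
      = ∫ t : ℝ in (0:ℂ).im..w.im, g ((0:ℂ).re + t * Complex.I) := by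
    apply intervalIntegral.integral_congr
    intro t ht
    have htδ : |t| ≤ δ := by
      simp only [Complex.zero_im, hwim, Set.uIcc_of_le, Set.mem_uIcc] at ht
      rcases abs_le.1 hyδ with ⟨h3, h4⟩
      rcases ht with ⟨ha, hb⟩ | ⟨ha, hb⟩ <;> rw [abs_le] <;> constructor <;> linarith
    have := hgper ((t : ℝ) * Complex.I) (by simpa using htδ)
    simp only [Complex.zero_re, hwre]
    have e1 : ((2 * Real.pi : ℝ) : ℂ) + (t:ℂ) * Complex.I
        = (t:ℂ) * Complex.I + 2 * (Real.pi : ℂ) := by push_cast; ring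
    have e2 : ((0:ℝ) : ℂ) + (t:ℂ) * Complex.I = (t:ℂ) * Complex.I := by push_cast; ring
    rw [e1, e2, this]
  rw [hvert, add_sub_cancel_right, sub_eq_zero] at key
  simp only [Complex.zero_re, Complex.zero_im, hwre, hwim] at key
  -- so the Fourier integral equals the shifted integral
  have hcoef : fourierCoef f n
      = (1 / (2 * Real.pi)) * ∫ x in (0:ℝ)..(2 * Real.pi), g (x + y * Complex.I) := by
    rw [fourierCoef, ← key]
    congr 1
    apply intervalIntegral.integral_congr
    intro x hx
    simp [hg, hext x, mul_comm]
  -- bound the shifted integrand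
  have hbound : ∀ x ∈ Set.uIcc (0:ℝ) (2 * Real.pi),
      ‖g (x + y * Complex.I)‖ ≤ M * Real.exp (-δ * |(n : ℝ)|) := by
    intro x hx
    have him : ((x : ℂ) + y * Complex.I).im = y := by simp
    have h1 : ‖F (x + y * Complex.I)‖ ≤ M := hM _ (by rw [him]; exact hyδ)
    have h2 : ‖Complex.exp (-(Complex.I * n * (x + y * Complex.I)))‖
        = Real.exp (-δ * |(n : ℝ)|) := by
      rw [Complex.norm_exp, ← hny]
      congr 1
      simp [Complex.mul_re, Complex.mul_im]
    simp only [hg, norm_mul, h2]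
    exact mul_le_mul_of_nonneg_right h1 (Real.exp_nonneg _)
  have hint : ‖∫ x in (0:ℝ)..(2 * Real.pi), g (x + y * Complex.I)‖
      ≤ M * Real.exp (-δ * |(n : ℝ)|) * |2 * Real.pi - 0| := by
    apply intervalIntegral.norm_integral_le_of_norm_le_const
    intro x hx
    exact hbound x (Set.Ioc_subset_Icc_self hx)
  have habs : ‖(1:ℂ) / (2 * Real.pi)‖ = 1 / (2 * Real.pi) := by
    rw [show ((1:ℂ) / (2 * Real.pi)) = ((1 / (2 * Real.pi) : ℝ) : ℂ) by push_cast; ring,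
      Complex.norm_real, Real.norm_eq_abs, abs_of_pos (by positivity)]
  rw [hcoef, norm_mul, habs]
  have hstep := mul_le_mul_of_nonneg_left hint
    (by positivity : (0:ℝ) ≤ 1 / (2 * Real.pi))
  refine hstep.trans (le_of_eq ?_)
  rw [sub_zero, abs_of_pos (by positivity : (0:ℝ) < 2 * Real.pi)]
  have hpi : Real.pi ≠ 0 := Real.pi_ne_zero
  field_simp
  push_cast
  rfl
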